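/- The class of languages generated by admissible signed grammars is closed under marked concatenation: if L₁, L₂ ⊆ Σ* are each generated by an admissible signed grammar over Σ, and $ is a symbol not in Σ, then the language L₁ $ L₂ = { u $ v : u ∈ L₁, v ∈ L₂ } over the alphabet Σ ∪ {$} is generated by an admissible signed grammar over Σ ∪ {$}. -/

import Mathlib

/-- A parse-tree node: either a terminal leaf or an internal node labeled by a
nonterminal with a list of children. -/
inductive PTree (N : Type) (T : Type) : Type where
  | leaf (t : T) : PTree N T
  | node (A : N) (children : List (PTree N T)) : PTree N T

namespace PTree

variable {N T : Type}

/-- The symbol (nonterminal or terminal) labeling the root of a tree. -/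
def toSymbol : PTree N T → N ⊕ T
  | leaf t => Sum.inr t
  | node A _ => Sum.inl A

/-- The yield of a parse tree: the word spelled by its leaves. -/
def yield : PTree N T → List T
  | leaf t => [t]
  | node _ cs => cs.attach.flatMap (fun c => yield c.1)
decreasing_by simp only [PTree.node.sizeOf_spec]; have h := List.sizeOf_lt_of_mem c.2; omega

/-- The sign of a parse tree w.r.t. a sign assignment on productions:
the product of the signs of the productions used at its nodes. -/
def sign (σ : N × List (N ⊕ T) → ℤ) : PTree N T → ℤ
  | leaf _ => 1
  | node A cs => σ (A, cs.map toSymbol) * (cs.attach.map (fun c => sign σ c.1)).prod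
decreasing_by simp only [PTree.node.sizeOf_spec]; have h := List.sizeOf_lt_of_mem c.2; omega

/-- Validity of a parse tree w.r.t. a set of productions: at every internal node,
the node label together with the list of symbols of its children is a production. -/
inductive Valid (R : Set (N × List (N ⊕ T))) : PTree N T → Prop where
  | leaf (t : T) : Valid R (PTree.leaf t)
  | node (A : N) (cs : List (PTree N T)) :
      (A, cs.map toSymbol) ∈ R → (∀ c ∈ cs, Valid R c) → Valid R (PTree.node A cs)

end PTree

/-- A signed grammar over a (finite) terminal alphabet `T`: a context-free grammar
with finitely many nonterminals and productions, together with a sign `1` or `-1`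
attached to each production. -/
structure SignedGrammar (T : Type) : Type 1 where
  /-- the type of nonterminals -/
  N : Type
  finN : Finite N
  /-- the start symbol -/
  start : N
  /-- the productions `A → α`, `α ∈ (N ∪ T)*` -/
  rules : Set (N × List (N ⊕ T))
  finRules : rules.Finite
  /-- the sign of each production -/
  sign : N × List (N ⊕ T) → ℤ
  sign_valid : ∀ r ∈ rules, sign r = 1 ∨ sign r = -1

namespace SignedGrammar

variable {T : Type}

/-- A parse tree over the grammar: a valid tree whose root is labeled by the start symbol. -/
def IsParseTree (G : SignedGrammar T) (t : PTree G.N T) : Prop :=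
  PTree.Valid G.rules t ∧ t.toSymbol = Sum.inl G.start

/-- The set of parse trees over `G` with yield `w`. -/
def parseTreesOf (G : SignedGrammar T) (w : List T) : Set (PTree G.N T) :=
  {t | G.IsParseTree t ∧ t.yield = w}

/-- `G` is admissible if every word has only finitely many parse trees. -/
def Admissible (G : SignedGrammar T) : Prop :=
  ∀ w : List T, (G.parseTreesOf w).Finite

/-- `n_w(G)`: the sum of the signs of all parse trees over `G` with yield `w`. -/
noncomputable def count (G : SignedGrammar T) (w : List T) : ℤ :=
  ∑ᶠ t ∈ G.parseTreesOf w, t.sign G.sign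

/-- `G` generates the language `L` if `G` is admissible, `n_w(G) = 1` for every
`w ∈ L` and `n_w(G) = 0` for every `w ∉ L`. -/
def Generates (G : SignedGrammar T) (L : Language T) : Prop :=
  G.Admissible ∧ (∀ w ∈ L, G.count w = 1) ∧ (∀ w ∉ L, G.count w = 0)

/-- An ordinary context-free grammar: every production has sign `+1`. -/
def Ordinary (G : SignedGrammar T) : Prop :=
  ∀ r ∈ G.rules, G.sign r = 1

/-- The language generated by `G` in the usual sense: all yields of parse trees. -/
def language (G : SignedGrammar T) : Language T :=
  {w | ∃ t : PTree G.N T, G.IsParseTree t ∧ t.yield = w}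

/-- `G` is unambiguous if every word has at most one parse tree. -/
def Unambiguous (G : SignedGrammar T) : Prop :=
  ∀ t₁ t₂ : PTree G.N T, G.IsParseTree t₁ → G.IsParseTree t₂ →
    t₁.yield = t₂.yield → t₁ = t₂

/-- The number of parse trees of `G` with yield `w` (degree of ambiguity of `w`). -/
noncomputable def ambCount (G : SignedGrammar T) (w : List T) : ℕ :=
  Nat.card {t : PTree G.N T // t ∈ G.parseTreesOf w}

end SignedGrammar


namespace PTree

variable {N T N' T' : Type}

theorem strongInd {motive : PTree N T → Prop}
    (hleaf : ∀ t, motive (.leaf t))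
    (hnode : ∀ A cs, (∀ c ∈ cs, motive c) → motive (.node A cs)) :
    ∀ t, motive t
  | .leaf t => hleaf t
  | .node A cs => hnode A cs (fun c _ => strongInd hleaf hnode c)
decreasing_by simp only [PTree.node.sizeOf_spec]; have h := List.sizeOf_lt_of_mem (by assumption); omega

@[simp] theorem toSymbol_leaf (t : T) : (leaf (N := N) t).toSymbol = Sum.inr t := rfl

@[simp] theorem toSymbol_node (A : N) (cs : List (PTree N T)) :
    (node A cs).toSymbol = Sum.inl A := rfl

@[simp] theorem yield_leaf (t : T) : (leaf (N := N) t).yield = [t] := by rw [yield]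

@[simp] theorem yield_node (A : N) (cs : List (PTree N T)) :
    (node A cs).yield = cs.flatMap yield := by
  rw [yield]; simp

@[simp] theorem sign_leaf (σ : N × List (N ⊕ T) → ℤ) (t : T) : (leaf (N := N) t).sign σ = 1 := by rw [sign]

@[simp] theorem sign_node (σ : N × List (N ⊕ T) → ℤ) (A : N) (cs : List (PTree N T)) :
    (node A cs).sign σ = σ (A, cs.map toSymbol) * (cs.map (sign σ)).prod := by
  rw [sign]; simp

/-- Embed a parse tree along a nonterminal map and a terminal map. -/
def embed (φ : N → N') (ψ : T → T') : PTree N T → PTree N' T'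
  | .leaf t => .leaf (ψ t)
  | .node A cs => .node (φ A) (cs.attach.map fun c => embed φ ψ c.1)
decreasing_by simp only [PTree.node.sizeOf_spec]; have h := List.sizeOf_lt_of_mem c.2; omega

@[simp] theorem embed_leaf (φ : N → N') (ψ : T → T') (t : T) :
    (leaf t).embed φ ψ = leaf (ψ t) := by rw [embed]

@[simp] theorem embed_node (φ : N → N') (ψ : T → T') (A : N) (cs : List (PTree N T)) :
    (node A cs).embed φ ψ = node (φ A) (cs.map (embed φ ψ)) := by
  rw [embed]; simp

@[simp] theorem toSymbol_embed (φ : N → N') (ψ : T → T') (t : PTree N T) :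
    (t.embed φ ψ).toSymbol = Sum.map φ ψ t.toSymbol := by
  cases t <;> simp [toSymbol]

theorem yield_embed (φ : N → N') (ψ : T → T') (t : PTree N T) :
    (t.embed φ ψ).yield = t.yield.map ψ := by
  induction t using strongInd with
  | hleaf t => simp
  | hnode A cs ih =>
    simp only [embed_node, yield_node, List.flatMap_map, List.map_flatMap]
    exact List.flatMap_congr (by simpa using ih)

end PTree

namespace PTree

variable {N T N' T' : Type}

theorem sign_embed (φ : N → N') (ψ : T → T') (σ' : N' × List (N' ⊕ T') → ℤ)
    (σ : N × List (N ⊕ T) → ℤ)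
    (h : ∀ A α, σ' (φ A, α.map (Sum.map φ ψ)) = σ (A, α)) (t : PTree N T) :
    (t.embed φ ψ).sign σ' = t.sign σ := by
  induction t using strongInd with
  | hleaf t => simp
  | hnode A cs ih =>
    simp only [embed_node, sign_node, List.map_map]
    have h1 : cs.map (toSymbol ∘ embed φ ψ) = (cs.map toSymbol).map (Sum.map φ ψ) := by
      simp only [List.map_map]
      exact List.map_congr_left fun c _ => toSymbol_embed φ ψ c
    have h2 : cs.map (sign σ' ∘ embed φ ψ) = cs.map (sign σ) :=
      List.map_congr_left fun c hc => ih c hc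
    rw [h1, h2, h]

theorem valid_embed {R : Set (N × List (N ⊕ T))} {R' : Set (N' × List (N' ⊕ T'))}
    (φ : N → N') (ψ : T → T')
    (hR : ∀ A α, (A, α) ∈ R → (φ A, α.map (Sum.map φ ψ)) ∈ R')
    {t : PTree N T} (ht : Valid R t) : Valid R' (t.embed φ ψ) := by
  induction ht with
  | leaf t => simpa using Valid.leaf (ψ t)
  | node A cs hr hcs ih =>
    rw [embed_node]
    refine Valid.node _ _ ?_ ?_
    · have h1 : (cs.map (embed φ ψ)).map toSymbol = (cs.map toSymbol).map (Sum.map φ ψ) := by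
        simp only [List.map_map]
        exact List.map_congr_left fun c _ => toSymbol_embed φ ψ c
      rw [h1]; exact hR A _ hr
    · intro c hc
      obtain ⟨c', hc', rfl⟩ := List.mem_map.1 hc
      exact ih c' hc'

def pull (ρN : N' → Option N) (ρT : T' → Option T) (A₀ : N) : PTree N' T' → PTree N T
  | .leaf t' => match ρT t' with | some t => .leaf t | none => .node A₀ []
  | .node B cs => .node ((ρN B).getD A₀) (cs.attach.map fun c => pull ρN ρT A₀ c.1)
decreasing_by simp only [PTree.node.sizeOf_spec]; have h := List.sizeOf_lt_of_mem c.2; omega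

theorem pull_embed (ρN : N' → Option N) (ρT : T' → Option T) (A₀ : N)
    {φ : N → N'} {ψ : T → T'} (hN : ∀ a, ρN (φ a) = some a) (hT : ∀ a, ρT (ψ a) = some a)
    (t : PTree N T) : pull ρN ρT A₀ (t.embed φ ψ) = t := by
  induction t using strongInd with
  | hleaf t => rw [embed_leaf, pull]; simp [hT]
  | hnode A cs ih =>
    rw [embed_node, pull]
    simp only [hN, Option.getD_some, List.attach_map_subtype_val, List.map_map, node.injEq, true_and]
    have : cs.map (pull ρN ρT A₀ ∘ embed φ ψ) = cs.map id :=
      List.map_congr_left fun c hc => ih c hc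
    simpa using this

theorem embed_injective {φ : N → N'} {ψ : T → T'}
    (ρN : N' → Option N) (ρT : T' → Option T) (A₀ : N)
    (hN : ∀ a, ρN (φ a) = some a) (hT : ∀ a, ρT (ψ a) = some a) :
    Function.Injective (embed φ ψ) := fun t₁ t₂ h => by
  rw [← pull_embed ρN ρT A₀ hN hT t₁, h, pull_embed ρN ρT A₀ hN hT t₂]

theorem list_lift {R : Set (N × List (N ⊕ T))} {φ : N → N'} {ψ : T → T'} :
    ∀ (cs : List (PTree N' T')) (α : List (N ⊕ T)),
    cs.map toSymbol = α.map (Sum.map φ ψ) →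
    (∀ c ∈ cs, ∀ s : N ⊕ T, c.toSymbol = Sum.map φ ψ s →
      ∃ t, Valid R t ∧ t.embed φ ψ = c ∧ t.toSymbol = s) →
    ∃ ts : List (PTree N T), (∀ t ∈ ts, Valid R t) ∧
      ts.map (embed φ ψ) = cs ∧ ts.map toSymbol = α := by
  intro cs
  induction cs with
  | nil =>
    intro α hα _
    simp only [List.map_nil] at hα
    obtain rfl := List.map_eq_nil_iff.mp hα.symm
    exact ⟨[], by simp, by simp, by simp⟩
  | cons c cs' ih =>
    intro α hα hex
    obtain ⟨a, α', rfl, ha, hα'⟩ : ∃ a α', α = a :: α' ∧ c.toSymbol = Sum.map φ ψ a ∧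
        cs'.map toSymbol = α'.map (Sum.map φ ψ) := by
      cases α with
      | nil => simp at hα
      | cons a α' => simp only [List.map_cons, List.cons.injEq] at hα; exact ⟨a, α', rfl, hα.1, hα.2⟩
    obtain ⟨t, htv, hte, hts⟩ := hex c (by simp) a ha
    obtain ⟨ts, h1, h2, h3⟩ := ih α' hα' (fun c' hc' => hex c' (by simp [hc']))
    refine ⟨t :: ts, ?_, by simp [hte, h2], by simp [hts, h3]⟩
    intro t' ht'
    rcases List.mem_cons.1 ht' with rfl | ht'
    · exact htv
    · exact h1 _ ht'

theorem exists_embed_of_valid {R : Set (N × List (N ⊕ T))} {R' : Set (N' × List (N' ⊕ T'))}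
    {φ : N → N'} {ψ : T → T'}
    (hR : ∀ (A : N) (α' : List (N' ⊕ T')), (φ A, α') ∈ R' →
      ∃ α, (A, α) ∈ R ∧ α' = α.map (Sum.map φ ψ))
    {c : PTree N' T'} (hc : Valid R' c) :
    ∀ s : N ⊕ T, c.toSymbol = Sum.map φ ψ s →
      ∃ t, Valid R t ∧ t.embed φ ψ = c ∧ t.toSymbol = s := by
  induction hc with
  | leaf t' =>
    intro s hs
    cases s with
    | inl A => simp [toSymbol, Sum.map] at hs
    | inr a =>
      simp only [toSymbol, Sum.map_inr, Sum.inr.injEq] at hs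
      exact ⟨.leaf a, Valid.leaf a, by simp [toSymbol, ← hs], rfl⟩
  | node B cs hr hcs ih =>
    intro s hs
    cases s with
    | inr a => simp [toSymbol, Sum.map] at hs
    | inl A =>
      simp only [toSymbol, Sum.map_inl, Sum.inl.injEq] at hs
      subst hs
      obtain ⟨α, hαR, hα⟩ := hR A _ hr
      obtain ⟨ts, h1, h2, h3⟩ := list_lift cs α hα (fun c' hc' => ih c' hc')
      exact ⟨.node A ts, Valid.node A ts (h3 ▸ hαR) h1, by simp [h2], by simp [toSymbol]⟩

end PTree

section MarkedConcat

variable {T : Type} (G₁ G₂ : SignedGrammar T)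

/-- Nonterminal embedding for the first grammar. -/
def nmap1 : G₁.N → Option (G₁.N ⊕ G₂.N) := fun A => some (Sum.inl A)

/-- Nonterminal embedding for the second grammar. -/
def nmap2 : G₂.N → Option (G₁.N ⊕ G₂.N) := fun A => some (Sum.inr A)

/-- Partial inverse of the symbol embedding of the first grammar. -/
def u1 : (Option (G₁.N ⊕ G₂.N)) ⊕ Option T → Option (G₁.N ⊕ T)
  | Sum.inl (some (Sum.inl A)) => some (Sum.inl A)
  | Sum.inr (some t) => some (Sum.inr t)
  | _ => none

/-- Partial inverse of the symbol embedding of the second grammar. -/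
def u2 : (Option (G₁.N ⊕ G₂.N)) ⊕ Option T → Option (G₂.N ⊕ T)
  | Sum.inl (some (Sum.inr A)) => some (Sum.inl A)
  | Sum.inr (some t) => some (Sum.inr t)
  | _ => none

theorem u1_f1 (s : G₁.N ⊕ T) : u1 G₁ G₂ (Sum.map (nmap1 G₁ G₂) some s) = some s := by
  rcases s with A | t <;> rfl

theorem u2_f2 (s : G₂.N ⊕ T) : u2 G₁ G₂ (Sum.map (nmap2 G₁ G₂) some s) = some s := by
  rcases s with A | t <;> rfl

theorem filterMap_u1 (α : List (G₁.N ⊕ T)) :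
    (α.map (Sum.map (nmap1 G₁ G₂) some)).filterMap (u1 G₁ G₂) = α := by
  rw [List.filterMap_map]
  rw [show (u1 G₁ G₂ ∘ Sum.map (nmap1 G₁ G₂) some) = some from funext (u1_f1 G₁ G₂)]
  exact List.filterMap_some

theorem filterMap_u2 (α : List (G₂.N ⊕ T)) :
    (α.map (Sum.map (nmap2 G₁ G₂) some)).filterMap (u2 G₁ G₂) = α := by
  rw [List.filterMap_map]
  rw [show (u2 G₁ G₂ ∘ Sum.map (nmap2 G₁ G₂) some) = some from funext (u2_f2 G₁ G₂)]
  exact List.filterMap_some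

/-- The right-hand side of the new start production `S → S₁ $ S₂`. -/
def startRHS : List ((Option (G₁.N ⊕ G₂.N)) ⊕ Option T) :=
  [Sum.inl (some (Sum.inl G₁.start)), Sum.inr none, Sum.inl (some (Sum.inr G₂.start))]

/-- The marked-concatenation grammar. -/
@[reducible] def mkG : SignedGrammar (Option T) where
  N := Option (G₁.N ⊕ G₂.N)
  finN := by
    have h1 : Finite G₁.N := G₁.finN
    have h2 : Finite G₂.N := G₂.finN
    exact Finite.of_equiv _ (Equiv.optionEquivSumPUnit.{0,0} (G₁.N ⊕ G₂.N)).symm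
  start := none
  rules := insert (none, startRHS G₁ G₂)
    (((fun r => (nmap1 G₁ G₂ r.1, r.2.map (Sum.map (nmap1 G₁ G₂) some))) '' G₁.rules) ∪
     ((fun r => (nmap2 G₁ G₂ r.1, r.2.map (Sum.map (nmap2 G₁ G₂) some))) '' G₂.rules))
  finRules := Set.Finite.insert _ ((G₁.finRules.image _).union (G₂.finRules.image _))
  sign := fun r => match r.1 with
    | none => 1
    | some (Sum.inl A) => G₁.sign (A, r.2.filterMap (u1 G₁ G₂))
    | some (Sum.inr A) => G₂.sign (A, r.2.filterMap (u2 G₁ G₂))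
  sign_valid := by
    rintro ⟨X, β⟩ hr
    rcases hr with h | h | h
    · simp only [Prod.mk.injEq] at h
      rw [h.1]
      left; rfl
    · obtain ⟨⟨A, α⟩, hmem, h⟩ := h
      simp only [Prod.mk.injEq] at h
      rw [← h.1, ← h.2, nmap1]
      simpa [filterMap_u1 G₁ G₂ α] using G₁.sign_valid _ hmem
    · obtain ⟨⟨A, α⟩, hmem, h⟩ := h
      simp only [Prod.mk.injEq] at h
      rw [← h.1, ← h.2, nmap2]
      simpa [filterMap_u2 G₁ G₂ α] using G₂.sign_valid _ hmem

theorem hR1 : ∀ (A : G₁.N) (α' : List ((mkG G₁ G₂).N ⊕ Option T)),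
    (nmap1 G₁ G₂ A, α') ∈ (mkG G₁ G₂).rules →
    ∃ α, (A, α) ∈ G₁.rules ∧ α' = α.map (Sum.map (nmap1 G₁ G₂) some) := by
  intro A α' hr
  rcases hr with h | h | h
  · exact absurd (congrArg Prod.fst h) (by simp [nmap1])
  · obtain ⟨⟨A', α⟩, hmem, h⟩ := h
    simp only [Prod.mk.injEq, nmap1, Option.some.injEq, Sum.inl.injEq] at h
    exact ⟨α, h.1.symm ▸ hmem, h.2.symm⟩
  · obtain ⟨⟨A', α⟩, hmem, h⟩ := h
    simp [nmap1, nmap2] at h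
  -- last case: heads differ

theorem hR2 : ∀ (A : G₂.N) (α' : List ((mkG G₁ G₂).N ⊕ Option T)),
    (nmap2 G₁ G₂ A, α') ∈ (mkG G₁ G₂).rules →
    ∃ α, (A, α) ∈ G₂.rules ∧ α' = α.map (Sum.map (nmap2 G₁ G₂) some) := by
  intro A α' hr
  rcases hr with h | h | h
  · exact absurd (congrArg Prod.fst h) (by simp [nmap2])
  · obtain ⟨⟨A', α⟩, hmem, h⟩ := h
    simp [nmap1, nmap2] at h
  · obtain ⟨⟨A', α⟩, hmem, h⟩ := h
    simp only [Prod.mk.injEq, nmap2, Option.some.injEq, Sum.inr.injEq] at h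
    exact ⟨α, h.1.symm ▸ hmem, h.2.symm⟩

@[simp] theorem mkG_start : (mkG G₁ G₂).start = none := rfl

/-- The embedding of parse trees of `G₁`. -/
def emb1 : PTree G₁.N T → PTree (mkG G₁ G₂).N (Option T) :=
  PTree.embed (nmap1 G₁ G₂) some

/-- The embedding of parse trees of `G₂`. -/
def emb2 : PTree G₂.N T → PTree (mkG G₁ G₂).N (Option T) :=
  PTree.embed (nmap2 G₁ G₂) some

/-- The parse tree of the composite grammar built from parse trees of the parts. -/
def Phi (p : PTree G₁.N T × PTree G₂.N T) : PTree (mkG G₁ G₂).N (Option T) :=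
  PTree.node none [emb1 G₁ G₂ p.1, PTree.leaf none, emb2 G₁ G₂ p.2]

theorem emb1_injective : Function.Injective (emb1 G₁ G₂) :=
  PTree.embed_injective
    (fun X => match X with | some (Sum.inl A) => some A | _ => none)
    (id : Option T → Option T) G₁.start (fun _ => rfl) (fun _ => rfl)

theorem emb2_injective : Function.Injective (emb2 G₁ G₂) :=
  PTree.embed_injective
    (fun X => match X with | some (Sum.inr A) => some A | _ => none)
    (id : Option T → Option T) G₂.start (fun _ => rfl) (fun _ => rfl)

theorem Phi_injective : Function.Injective (Phi G₁ G₂) := by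
  rintro ⟨a, b⟩ ⟨c, d⟩ h
  simp only [Phi, PTree.node.injEq, List.cons.injEq, true_and, and_true] at h
  exact Prod.ext (emb1_injective G₁ G₂ h.1) (emb2_injective G₁ G₂ h.2)

theorem yield_Phi (t₁ : PTree G₁.N T) (t₂ : PTree G₂.N T) :
    (Phi G₁ G₂ (t₁, t₂)).yield = t₁.yield.map some ++ (none : Option T) :: t₂.yield.map some := by
  simp [Phi, emb1, emb2, PTree.yield_embed]

theorem sign_Phi (t₁ : PTree G₁.N T) (t₂ : PTree G₂.N T) :
    (Phi G₁ G₂ (t₁, t₂)).sign (mkG G₁ G₂).sign = t₁.sign G₁.sign * t₂.sign G₂.sign := by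
  have h1 : (emb1 G₁ G₂ t₁).sign (mkG G₁ G₂).sign = t₁.sign G₁.sign :=
    PTree.sign_embed _ _ _ _ (fun A α => by
      show G₁.sign (A, (α.map _).filterMap (u1 G₁ G₂)) = _
      rw [filterMap_u1]) t₁
  have h2 : (emb2 G₁ G₂ t₂).sign (mkG G₁ G₂).sign = t₂.sign G₂.sign :=
    PTree.sign_embed _ _ _ _ (fun A α => by
      show G₂.sign (A, (α.map _).filterMap (u2 G₁ G₂)) = _
      rw [filterMap_u2]) t₂
  simp only [Phi, PTree.sign_node, List.map_cons, List.map_nil, List.prod_cons, List.prod_nil,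
    PTree.sign_leaf, h1, h2]
  show (1 : ℤ) * _ = _
  ring

theorem isParseTree_iff (t : PTree (mkG G₁ G₂).N (Option T)) :
    (mkG G₁ G₂).IsParseTree t ↔
    ∃ t₁ t₂, G₁.IsParseTree t₁ ∧ G₂.IsParseTree t₂ ∧ t = Phi G₁ G₂ (t₁, t₂) := by
  constructor
  · rintro ⟨hv, hs⟩
    cases t with
    | leaf t' => simp [PTree.toSymbol] at hs
    | node X cs =>
      simp only [PTree.toSymbol, Sum.inl.injEq] at hs
      subst hs
      rcases hv with _ | ⟨_, _, hr, hcs⟩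
      have hrhs : cs.map PTree.toSymbol = startRHS G₁ G₂ := by
        rcases hr with h | h | h
        · exact congrArg Prod.snd h
        · obtain ⟨⟨A', α⟩, _, h⟩ := h
          exact absurd (congrArg Prod.fst h) (by simp [nmap1, mkG])
        · obtain ⟨⟨A', α⟩, _, h⟩ := h
          exact absurd (congrArg Prod.fst h) (by simp [nmap2, mkG])
      rcases cs with _ | ⟨c1, _ | ⟨c2, _ | ⟨c3, _ | ⟨c4, cs⟩⟩⟩⟩
      · exact absurd (congrArg List.length hrhs) (by simp [startRHS])
      · exact absurd (congrArg List.length hrhs) (by simp [startRHS])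
      · exact absurd (congrArg List.length hrhs) (by simp [startRHS])
      · simp only [startRHS, List.map_cons, List.map_nil, List.cons.injEq, and_true] at hrhs
        obtain ⟨hs1, hs2, hs3⟩ := hrhs
        obtain ⟨t₁, ht₁v, ht₁e, ht₁s⟩ :=
          PTree.exists_embed_of_valid (hR1 G₁ G₂) (hcs c1 (by simp))
            (Sum.inl G₁.start) (by simpa [nmap1] using hs1)
        obtain ⟨t₂, ht₂v, ht₂e, ht₂s⟩ :=
          PTree.exists_embed_of_valid (hR2 G₁ G₂) (hcs c3 (by simp))
            (Sum.inl G₂.start) (by simpa [nmap2] using hs3)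
        have hc2 : c2 = PTree.leaf none := by
          cases c2 with
          | leaf x => simp only [PTree.toSymbol_leaf, Sum.inr.injEq] at hs2; rw [hs2]
          | node _ _ => simp at hs2
        exact ⟨t₁, t₂, ⟨ht₁v, ht₁s⟩, ⟨ht₂v, ht₂s⟩, by
          simp [Phi, emb1, emb2, ht₁e, ht₂e, hc2, mkG_start]⟩
      · exact absurd (congrArg List.length hrhs) (by simp [startRHS])
  · rintro ⟨t₁, t₂, ⟨h1v, h1s⟩, ⟨h2v, h2s⟩, rfl⟩
    constructor
    · refine PTree.Valid.node _ _ ?_ ?_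
      · have e1 : (emb1 G₁ G₂ t₁).toSymbol = Sum.inl (some (Sum.inl G₁.start)) := by
          rw [emb1, PTree.toSymbol_embed, h1s]; rfl
        have e2 : (emb2 G₁ G₂ t₂).toSymbol = Sum.inl (some (Sum.inr G₂.start)) := by
          rw [emb2, PTree.toSymbol_embed, h2s]; rfl
        left
        simp only [startRHS, List.map_cons, List.map_nil, e1, e2, PTree.toSymbol_leaf,
          Prod.mk.injEq, and_self, and_true, mkG_start]
      · intro c hc
        rcases List.mem_cons.1 hc with rfl | hc
        · exact PTree.valid_embed _ _ (fun A α hα =>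
            Or.inr (Or.inl ⟨(A, α), hα, rfl⟩)) h1v
        rcases List.mem_cons.1 hc with rfl | hc
        · exact PTree.Valid.leaf none
        rcases List.mem_cons.1 hc with rfl | hc
        · exact PTree.valid_embed _ _ (fun A α hα =>
            Or.inr (Or.inr ⟨(A, α), hα, rfl⟩)) h2v
        · simp at hc
    · rfl

end MarkedConcat

section MarkedConcat2

variable {T : Type} (G₁ G₂ : SignedGrammar T)

theorem marked_decomp_unique : ∀ (u u' v v' : List T),
    u.map some ++ (none : Option T) :: v.map some = u'.map some ++ none :: v'.map some →
    u = u' ∧ v = v' := by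
  intro u
  induction u with
  | nil =>
    intro u' v v' h
    cases u' with
    | nil =>
      simp only [List.map_nil, List.nil_append, List.cons.injEq, true_and] at h
      exact ⟨rfl, List.map_injective_iff.2 (Option.some_injective T) h⟩
    | cons y u'' => simp at h
  | cons x u ih =>
    intro u' v v' h
    cases u' with
    | nil => simp at h
    | cons y u'' =>
      simp only [List.map_cons, List.cons_append, List.cons.injEq, Option.some.injEq] at h
      obtain ⟨rfl, h⟩ := h
      obtain ⟨rfl, rfl⟩ := ih u'' v v' h
      exact ⟨rfl, rfl⟩

theorem parseTrees_mkG (u v : List T) :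
    (mkG G₁ G₂).parseTreesOf (u.map some ++ (none : Option T) :: v.map some) =
    Phi G₁ G₂ '' ((G₁.parseTreesOf u) ×ˢ (G₂.parseTreesOf v)) := by
  ext t
  constructor
  · rintro ⟨hp, hy⟩
    obtain ⟨t₁, t₂, hp1, hp2, rfl⟩ := (isParseTree_iff _ _ t).1 hp
    rw [yield_Phi] at hy
    obtain ⟨hu, hv⟩ := marked_decomp_unique _ _ _ _ hy
    exact ⟨(t₁, t₂), ⟨⟨hp1, hu⟩, ⟨hp2, hv⟩⟩, rfl⟩
  · rintro ⟨⟨t₁, t₂⟩, ⟨⟨hp1, hy1⟩, hp2, hy2⟩, rfl⟩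
    exact ⟨(isParseTree_iff _ _ _).2 ⟨t₁, t₂, hp1, hp2, rfl⟩, by rw [yield_Phi, hy1, hy2]⟩

theorem parseTrees_mkG_empty (w : List (Option T))
    (h : ¬ ∃ u v : List T, w = u.map some ++ (none : Option T) :: v.map some) :
    (mkG G₁ G₂).parseTreesOf w = ∅ := by
  ext t
  simp only [Set.mem_empty_iff_false, iff_false]
  rintro ⟨hp, hy⟩
  obtain ⟨t₁, t₂, _, _, rfl⟩ := (isParseTree_iff _ _ t).1 hp
  exact h ⟨t₁.yield, t₂.yield, by rw [← hy, yield_Phi]⟩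

theorem finsum_mem_prod_set {α β : Type} {s : Set α} {t : Set β} (hs : s.Finite) (ht : t.Finite)
    (f : α → ℤ) (g : β → ℤ) :
    (∑ᶠ p ∈ s ×ˢ t, f p.1 * g p.2) = (∑ᶠ x ∈ s, f x) * ∑ᶠ y ∈ t, g y := by
  classical
  rw [← Set.Finite.coe_toFinset hs, ← Set.Finite.coe_toFinset ht, ← Finset.coe_product,
    finsum_mem_coe_finset, finsum_mem_coe_finset, finsum_mem_coe_finset,
    Finset.sum_product, Finset.sum_mul_sum]

theorem count_mkG (u v : List T) (hadm1 : G₁.Admissible) (hadm2 : G₂.Admissible) :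
    (mkG G₁ G₂).count (u.map some ++ (none : Option T) :: v.map some) =
    G₁.count u * G₂.count v := by
  rw [SignedGrammar.count, parseTrees_mkG,
    finsum_mem_image ((Phi_injective G₁ G₂).injOn)]
  rw [finsum_mem_congr rfl (fun p _ => sign_Phi G₁ G₂ p.1 p.2)]
  exact finsum_mem_prod_set (hadm1 u) (hadm2 v) _ _

end MarkedConcat2

/-- Languages generated by admissible signed grammars are closed under marked
concatenation `L₁ $ L₂`, where the marker `$` (modeled as `none` in `Option T`)
is a fresh symbol not in `T`. -/
theorem signed_grammar_closed_under_marked_concatenation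
    (T : Type) [Fintype T] (L₁ L₂ : Language T)
    (G₁ G₂ : SignedGrammar T) (h₁ : G₁.Generates L₁) (h₂ : G₂.Generates L₂) :
    ∃ G : SignedGrammar (Option T),
      G.Generates {w : List (Option T) |
        ∃ u ∈ L₁, ∃ v ∈ L₂, w = u.map some ++ (none : Option T) :: v.map some} := by
  obtain ⟨adm1, hin1, hout1⟩ := h₁
  obtain ⟨adm2, hin2, hout2⟩ := h₂
  refine ⟨mkG G₁ G₂, ?_, ?_, ?_⟩
  · intro w
    by_cases h : ∃ u v : List T, w = u.map some ++ (none : Option T) :: v.map some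
    · obtain ⟨u, v, rfl⟩ := h
      rw [parseTrees_mkG]
      exact (((adm1 u).prod (adm2 v)).image _)
    · rw [parseTrees_mkG_empty _ _ _ h]
      exact Set.finite_empty
  · rintro w ⟨u, hu, v, hv, rfl⟩
    rw [count_mkG _ _ _ _ adm1 adm2, hin1 u hu, hin2 v hv, mul_one]
  · intro w hw
    by_cases h : ∃ u v : List T, w = u.map some ++ (none : Option T) :: v.map some
    · obtain ⟨u, v, rfl⟩ := h
      rw [count_mkG _ _ _ _ adm1 adm2]
      have : u ∉ L₁ ∨ v ∉ L₂ := by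
        by_contra hc
        push_neg at hc
        exact hw ⟨u, hc.1, v, hc.2, rfl⟩
      rcases this with h' | h'
      · rw [hout1 u h', zero_mul]
      · rw [hout2 v h', mul_zero]
    · rw [SignedGrammar.count, parseTrees_mkG_empty _ _ _ h, finsum_mem_empty]
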